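/- Let X be a normed vector space over ℂ, let L, U : X → X be continuous linear operators, and let ρ, γ ≥ 0 be reals such that for all v ∈ X: ‖L(Uv)‖ ≤ ρ‖Uv‖, ‖U(Lv)‖ ≤ ρ‖Lv‖, ‖L(Lv)‖ ≤ γ‖Lv‖, ‖U(Uv)‖ ≤ γ‖Uv‖, ‖Lv‖ ≤ √(γ²+ρ²)‖v‖ and ‖Uv‖ ≤ √(γ²+ρ²)‖v‖. Then for every integer n ≥ 2, every integer j with 1 ≤ j ≤ n−1, every word w of length n with exactly j transitions, and every v ∈ X: ‖m_w(L,U) v‖ ≤ √(γ²+ρ²) · ρ^j · γ^{n−1−j} · ‖v‖. -/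

import Mathlib

/-- Value of a word `w : Fin n → Bool` at a natural index, `false` out of range. -/
def wordGet {n : ℕ} (w : Fin n → Bool) (i : ℕ) : Bool :=
  if h : i < n then w ⟨i, h⟩ else false

/-- The number of transitions of a word `w : Fin n → Bool`, i.e. the number of indices
`i` with `0 ≤ i < n - 1` and `w i ≠ w (i+1)`. -/
def transitions {n : ℕ} (w : Fin n → Bool) : ℕ :=
  ((Finset.range (n - 1)).filter fun i => wordGet w i ≠ wordGet w (i + 1)).card

/-- The monomial `m_w(L,U) = c₀ ∘ c₁ ∘ ⋯ ∘ c_{n-1}` of a word `w : Fin n → Bool`,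
where `cᵢ = L` if `w i = true` and `cᵢ = U` if `w i = false` (in the monoid of
continuous linear operators, multiplication is composition). -/
def wordProd {M : Type*} [Monoid M] {n : ℕ} (w : Fin n → Bool) (x y : M) : M :=
  (List.ofFn fun i : Fin n => if w i then x else y).prod

lemma wordProd_succ {M : Type*} [Monoid M] {k : ℕ} (w : Fin (k + 1) → Bool) (x y : M) :
    wordProd w x y = (if w 0 then x else y) * wordProd (w ∘ Fin.succ) x y := by
  unfold wordProd
  rw [List.ofFn_succ, List.prod_cons]
  rfl

lemma transitions_le {k : ℕ} (w : Fin k → Bool) : transitions w ≤ k - 1 := by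
  unfold transitions
  exact (Finset.card_filter_le _ _).trans (by simp)

lemma transitions_succ {k : ℕ} (w : Fin (k + 2) → Bool) :
    transitions w = (if w 0 ≠ w 1 then 1 else 0) + transitions (w ∘ Fin.succ) := by
  unfold transitions
  rw [Finset.card_filter, Finset.card_filter]
  simp only [show k + 2 - 1 = k + 1 from rfl, show k + 1 - 1 = k from rfl]
  rw [Finset.sum_range_succ']
  have h0 : wordGet w 0 = w 0 := by simp [wordGet]
  have h1 : wordGet w 1 = w 1 := by simp [wordGet]
  have hshift : ∀ i : ℕ, wordGet (w ∘ Fin.succ) i = wordGet w (i + 1) := by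
    intro i
    unfold wordGet
    split_ifs with ha hb hb
    · congr 1
    · omega
    · omega
    · rfl
  rw [add_comm]
  congr 1
  · apply Finset.sum_congr rfl
    intro i _
    rw [hshift, hshift]

lemma key_ineq {X : Type*} [NormedAddCommGroup X] [NormedSpace ℂ X]
    (L U : X →L[ℂ] X) (ρ γ : ℝ) (hρ : 0 ≤ ρ) (hγ : 0 ≤ γ)
    (hLU : ∀ v : X, ‖L (U v)‖ ≤ ρ * ‖U v‖)
    (hUL : ∀ v : X, ‖U (L v)‖ ≤ ρ * ‖L v‖)
    (hLL : ∀ v : X, ‖L (L v)‖ ≤ γ * ‖L v‖)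
    (hUU : ∀ v : X, ‖U (U v)‖ ≤ γ * ‖U v‖)
    (hL : ∀ v : X, ‖L v‖ ≤ Real.sqrt (γ ^ 2 + ρ ^ 2) * ‖v‖)
    (hU : ∀ v : X, ‖U v‖ ≤ Real.sqrt (γ ^ 2 + ρ ^ 2) * ‖v‖) :
    ∀ (m : ℕ) (w : Fin (m + 1) → Bool) (v : X),
      ‖(wordProd w L U) v‖ ≤
        Real.sqrt (γ ^ 2 + ρ ^ 2) * ρ ^ (transitions w) * γ ^ (m - transitions w) * ‖v‖ := by
  intro m
  induction m with
  | zero =>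
    intro w v
    have ht : transitions w = 0 := by simp [transitions]
    rw [ht]
    have hp : wordProd w L U = (if w 0 then L else U) := by
      rw [wordProd_succ]
      have : wordProd (w ∘ Fin.succ) L U = 1 := by
        unfold wordProd; simp
      rw [this, mul_one]
    rw [hp]
    simp only [pow_zero, mul_one, Nat.zero_sub]
    cases hw0 : w 0 <;> simp only [if_true, if_false, Bool.false_eq_true, cond_eq_if]
    · simpa using hU v
    · simpa using hL v
  | succ m IH =>
    intro w v
    set s := Real.sqrt (γ ^ 2 + ρ ^ 2) with hs
    have hs0 : 0 ≤ s := Real.sqrt_nonneg _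
    have hform : wordProd (w ∘ Fin.succ) L U v
        = (if w 1 then L else U) (wordProd ((w ∘ Fin.succ) ∘ Fin.succ) L U v) := by
      rw [wordProd_succ, ContinuousLinearMap.mul_apply]
      have : (w ∘ Fin.succ) 0 = w 1 := by
        simp [Function.comp, Fin.succ_zero_eq_one]
      rw [this]
    have hstep : ‖wordProd w L U v‖ ≤
        (if w 0 ≠ w 1 then ρ else γ) * ‖wordProd (w ∘ Fin.succ) L U v‖ := by
      rw [wordProd_succ w, ContinuousLinearMap.mul_apply, hform]
      cases hw0 : w 0 <;> cases hw1 : w 1 <;>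
        simp only [hw0, hw1, if_true, if_false, ne_eq, Bool.false_eq_true,
          not_true, not_false_iff, Bool.true_eq_false]
      · simpa using hUU _
      · simpa using hUL _
      · simpa using hLU _
      · simpa using hLL _
    have ht' : transitions (w ∘ Fin.succ) ≤ m := by
      have := transitions_le (w ∘ Fin.succ); simpa using this
    have hIH := IH (w ∘ Fin.succ) v
    rw [transitions_succ w]
    set t' := transitions (w ∘ Fin.succ) with htdef
    by_cases h01 : w 0 = w 1
    · simp only [h01, ne_eq, not_true, if_false, ite_not] at hstep ⊢
      simp only [if_true, zero_add]
      have hexp : m + 1 - t' = (m - t') + 1 := by omega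
      rw [hexp, pow_succ]
      calc ‖wordProd w L U v‖ ≤ γ * ‖wordProd (w ∘ Fin.succ) L U v‖ := by simpa using hstep
        _ ≤ γ * (s * ρ ^ t' * γ ^ (m - t') * ‖v‖) := by
            exact mul_le_mul_of_nonneg_left hIH hγ
        _ = s * ρ ^ t' * (γ ^ (m - t') * γ) * ‖v‖ := by ring
    · simp only [h01, ne_eq, not_false_iff, if_true] at hstep ⊢
      have hexp : m + 1 - (1 + t') = m - t' := by omega
      rw [hexp, add_comm 1 t', pow_succ]
      calc ‖wordProd w L U v‖ ≤ ρ * ‖wordProd (w ∘ Fin.succ) L U v‖ := hstep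
        _ ≤ ρ * (s * ρ ^ t' * γ ^ (m - t') * ‖v‖) := mul_le_mul_of_nonneg_left hIH hρ
        _ = s * (ρ ^ t' * ρ) * γ ^ (m - t') * ‖v‖ := by ring

/-- **The key inequality (4.22) in the proof of Theorem 4.11.** Under the conclusions
of Lemma 4.10 for the operators `L, U`, any monomial of order `n ≥ 2` with
`1 ≤ j ≤ n-1` transitions satisfies
`‖m_w(L,U) v‖ ≤ √(γ²+ρ²) ρ^j γ^(n-1-j) ‖v‖`. -/
theorem norm_wordProd_apply_le {X : Type*} [NormedAddCommGroup X] [NormedSpace ℂ X]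
    (L U : X →L[ℂ] X) (ρ γ : ℝ) (hρ : 0 ≤ ρ) (hγ : 0 ≤ γ)
    (hLU : ∀ v : X, ‖L (U v)‖ ≤ ρ * ‖U v‖)
    (hUL : ∀ v : X, ‖U (L v)‖ ≤ ρ * ‖L v‖)
    (hLL : ∀ v : X, ‖L (L v)‖ ≤ γ * ‖L v‖)
    (hUU : ∀ v : X, ‖U (U v)‖ ≤ γ * ‖U v‖)
    (hL : ∀ v : X, ‖L v‖ ≤ Real.sqrt (γ ^ 2 + ρ ^ 2) * ‖v‖)
    (hU : ∀ v : X, ‖U v‖ ≤ Real.sqrt (γ ^ 2 + ρ ^ 2) * ‖v‖)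
    (n : ℕ) (hn : 2 ≤ n) (j : ℕ) (hj1 : 1 ≤ j) (hj2 : j ≤ n - 1)
    (w : Fin n → Bool) (hw : transitions w = j) (v : X) :
    ‖(wordProd w L U) v‖ ≤
      Real.sqrt (γ ^ 2 + ρ ^ 2) * ρ ^ j * γ ^ (n - 1 - j) * ‖v‖ := by
  obtain ⟨m, rfl⟩ : ∃ m, n = m + 1 := ⟨n - 1, by omega⟩
  have h := key_ineq L U ρ γ hρ hγ hLU hUL hLL hUU hL hU m w v
  rw [hw] at h
  simpa using h
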